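/- Let V ∈ C¹ satisfy V_x + Λ(t,x) V_t = G(t,x) with |G(t,x)| ≤ C₃|V(t,x)|, |Λ_t(t,x)| ≤ C₂, and V(t,0) = 0 for t > 0. Fix (t',x') with t' > T₀ := L/λ₀ and 0 < x' < L, and let t₁(x), t₂(x) be the slow and fast characteristics through (t',x'), i.e. dt₁/dx = 1/λ₁(r(t₁,x),s(t₁,x)), dt₂/dx = 1/λ₂(r(t₂,x),s(t₂,x)) with t₁(x') = t₂(x') = t'. Define I(x) = (1/2)∫_{t₁(x)}^{t₂(x)} |V(t,x)|² dt for x ∈ [0,x']. Then I(0) = 0 and I'(x) ≤ (C₂/2 + C₃) I(x), and consequently, by Gronwall's inequality, I(x) ≡ 0 on [0,x'] and V(t',x') = 0. -/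

import Mathlib

noncomputable section

/-- Partial derivative with respect to the first (time) variable. -/
def pdt (f : ℝ → ℝ → ℝ) (t x : ℝ) : ℝ := deriv (fun s => f s x) t

/-- Partial derivative with respect to the second (space) variable. -/
def pdx (f : ℝ → ℝ → ℝ) (t x : ℝ) : ℝ := deriv (fun y => f t y) x

/-- Squared L² norm on the interval [a,b]. -/
def L2sq (a b : ℝ) (f : ℝ → ℝ) : ℝ := ∫ t in a..b, (f t) ^ 2

/-- Squared H¹ norm on the interval [a,b]. -/
def H1sq (a b : ℝ) (f : ℝ → ℝ) : ℝ := L2sq a b f + L2sq a b (deriv f)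

/-- Squared H² norm on the interval [a,b]. -/
def H2sq (a b : ℝ) (f : ℝ → ℝ) : ℝ :=
  L2sq a b f + L2sq a b (deriv f) + L2sq a b (deriv (deriv f))

/-- The primitive ∫₀ᵗ α(s) ds of the external force coefficient. -/
def intAlpha (α : ℝ → ℝ) (t : ℝ) : ℝ := ∫ s in (0:ℝ)..t, α s

/-- Background velocity u_α(t) = e^{∫₀ᵗ α} ū. -/
def uBack (α : ℝ → ℝ) (ub t : ℝ) : ℝ := Real.exp (intAlpha α t) * ub

/-- Background Riemann invariant r_α(t) = u_α(t)/2 − c̄/(γ−1). -/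
def rBack (α : ℝ → ℝ) (ub cb γ t : ℝ) : ℝ := uBack α ub t / 2 - cb / (γ - 1)

/-- Background Riemann invariant s_α(t) = u_α(t)/2 + c̄/(γ−1). -/
def sBack (α : ℝ → ℝ) (ub cb γ t : ℝ) : ℝ := uBack α ub t / 2 + cb / (γ - 1)


open Set

section AuxLemmas

private lemma pdt_hasDerivAt' (f : ℝ → ℝ → ℝ)
    (hf : ContDiff ℝ 1 (fun p : ℝ × ℝ => f p.1 p.2)) (t x : ℝ) :
    HasDerivAt (fun s => f s x) (fderiv ℝ (fun p : ℝ × ℝ => f p.1 p.2) (t, x) (1, 0)) t := by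
  have hF : HasFDerivAt (fun p : ℝ × ℝ => f p.1 p.2)
      (fderiv ℝ (fun p : ℝ × ℝ => f p.1 p.2) (t, x)) (t, x) :=
    (hf.differentiable one_ne_zero (t, x)).hasFDerivAt
  have hc : HasDerivAt (fun s : ℝ => ((s, x) : ℝ × ℝ)) ((1 : ℝ), (0 : ℝ)) t :=
    (hasDerivAt_id t).prodMk (hasDerivAt_const t x)
  exact hF.comp_hasDerivAt t hc

private lemma pdx_hasDerivAt' (f : ℝ → ℝ → ℝ)
    (hf : ContDiff ℝ 1 (fun p : ℝ × ℝ => f p.1 p.2)) (t x : ℝ) :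
    HasDerivAt (fun y => f t y) (fderiv ℝ (fun p : ℝ × ℝ => f p.1 p.2) (t, x) (0, 1)) x := by
  have hF : HasFDerivAt (fun p : ℝ × ℝ => f p.1 p.2)
      (fderiv ℝ (fun p : ℝ × ℝ => f p.1 p.2) (t, x)) (t, x) :=
    (hf.differentiable one_ne_zero (t, x)).hasFDerivAt
  have hc : HasDerivAt (fun y : ℝ => ((t, y) : ℝ × ℝ)) ((0 : ℝ), (1 : ℝ)) x :=
    (hasDerivAt_const x t).prodMk (hasDerivAt_id x)
  exact hF.comp_hasDerivAt x hc

private lemma fderiv_apply_eq' (f : ℝ → ℝ → ℝ)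
    (hf : ContDiff ℝ 1 (fun p : ℝ × ℝ => f p.1 p.2)) (t x a b : ℝ) :
    fderiv ℝ (fun p : ℝ × ℝ => f p.1 p.2) (t, x) (a, b)
      = a * pdt f t x + b * pdx f t x := by
  have h1 : pdt f t x = fderiv ℝ (fun p : ℝ × ℝ => f p.1 p.2) (t, x) (1, 0) :=
    (pdt_hasDerivAt' f hf t x).deriv
  have h2 : pdx f t x = fderiv ℝ (fun p : ℝ × ℝ => f p.1 p.2) (t, x) (0, 1) :=
    (pdx_hasDerivAt' f hf t x).deriv
  have hab : ((a, b) : ℝ × ℝ) = a • ((1 : ℝ), (0 : ℝ)) + b • ((0 : ℝ), (1 : ℝ)) := by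
    simp [Prod.ext_iff]
  rw [hab, map_add, map_smul, map_smul, ← h1, ← h2]
  simp [smul_eq_mul]

private lemma line_hasDerivAt' (f : ℝ → ℝ → ℝ)
    (hf : ContDiff ℝ 1 (fun p : ℝ × ℝ => f p.1 p.2)) (t x a b : ℝ) :
    HasDerivAt (fun ε : ℝ => f (t + ε * a) (x + ε * b))
      (a * pdt f t x + b * pdx f t x) 0 := by
  have hF : HasFDerivAt (fun p : ℝ × ℝ => f p.1 p.2)
      (fderiv ℝ (fun p : ℝ × ℝ => f p.1 p.2) (t, x)) (t, x) :=
    (hf.differentiable one_ne_zero (t, x)).hasFDerivAt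
  have hγ : HasDerivAt (fun ε : ℝ => ((t + ε * a, x + ε * b) : ℝ × ℝ)) ((a : ℝ), (b : ℝ)) 0 := by
    have h1 : HasDerivAt (fun ε : ℝ => t + ε * a) a 0 := by
      simpa using (hasDerivAt_const (0 : ℝ) t).fun_add ((hasDerivAt_id (0 : ℝ)).mul_const a)
    have h2 : HasDerivAt (fun ε : ℝ => x + ε * b) b 0 := by
      simpa using (hasDerivAt_const (0 : ℝ) x).fun_add ((hasDerivAt_id (0 : ℝ)).mul_const b)
    exact h1.prodMk h2
  have h0 : ((t + (0 : ℝ) * a, x + (0 : ℝ) * b) : ℝ × ℝ) = (t, x) := by simp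
  rw [← fderiv_apply_eq' f hf t x a b]
  have hF' : HasFDerivAt (fun p : ℝ × ℝ => f p.1 p.2)
      (fderiv ℝ (fun p : ℝ × ℝ => f p.1 p.2) (t, x))
      ((fun ε : ℝ => ((t + ε * a, x + ε * b) : ℝ × ℝ)) 0) := by
    simpa [h0] using hF
  exact hF'.comp_hasDerivAt 0 hγ

private lemma step_contra' (C₃ c : ℝ) (hC₃ : 0 < C₃) (hc : c = 2 * C₃ + 1)
    (f Gf : ℝ → ℝ → ℝ) (hf : ContDiff ℝ 1 (fun p : ℝ × ℝ => f p.1 p.2))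
    (s y a : ℝ) (hy : 0 < y) (_ha0 : 0 < a)
    (hpde : pdx f s y + a * pdt f s y = Gf s y)
    (hGb : (Gf s y) ^ 2 ≤ 2 * C₃ ^ 2 * (f s y) ^ 2)
    (hfpos : 0 < (f s y) ^ 2)
    (hmax : ∀ ε ∈ Ioc (0 : ℝ) y,
      (f (s - ε * a) (y - ε)) ^ 2 * Real.exp (-(2 * c * (y - ε)))
        ≤ (f s y) ^ 2 * Real.exp (-(2 * c * y))) :
    False := by
  set F := f s y with hF
  set G := Gf s y with hGdef
  have hφ : HasDerivAt (fun ε : ℝ => f (s - ε * a) (y - ε)) (-G) 0 := by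
    have h := line_hasDerivAt' f hf s y (-a) (-1)
    have hfun : (fun ε : ℝ => f (s + ε * -a) (y + ε * -1))
        = (fun ε : ℝ => f (s - ε * a) (y - ε)) := by
      funext ε
      have e1 : s + ε * -a = s - ε * a := by ring
      have e2 : y + ε * -1 = y - ε := by ring
      rw [e1, e2]
    rw [hfun] at h
    have hval : -a * pdt f s y + -1 * pdx f s y = -G := by
      rw [hGdef]; linear_combination -hpde
    rwa [hval] at h
  set ψ : ℝ → ℝ := fun ε => (f (s - ε * a) (y - ε)) ^ 2 * Real.exp (-(2 * c * (y - ε)))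
    with hψdef
  have hφsq : HasDerivAt (fun ε : ℝ => (f (s - ε * a) (y - ε)) ^ 2) (2 * F * (-G)) 0 := by
    have h := hφ.fun_pow 2
    refine h.congr_deriv ?_
    simp [hF]
  have hexp : HasDerivAt (fun ε : ℝ => Real.exp (-(2 * c * (y - ε))))
      (Real.exp (-(2 * c * y)) * (2 * c)) 0 := by
    have hinner : HasDerivAt (fun ε : ℝ => -(2 * c * (y - ε))) (2 * c) 0 := by
      have h := ((hasDerivAt_id (0 : ℝ)).const_mul (2 * c)).const_add (-(2 * c * y))
      have hfun : (fun ε : ℝ => -(2 * c * y) + 2 * c * ε)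
          = (fun ε : ℝ => -(2 * c * (y - ε))) := by funext ε; ring
      simpa [hfun] using h
    have h := hinner.exp
    simpa using h
  set D : ℝ := (2 * F * (-G) + F ^ 2 * (2 * c)) * Real.exp (-(2 * c * y)) with hDdef
  have hψ : HasDerivAt ψ D 0 := by
    have h := hφsq.fun_mul hexp
    refine h.congr_deriv ?_
    rw [hDdef]
    simp [hF]
    ring
  have hψ0 : ψ 0 = F ^ 2 * Real.exp (-(2 * c * y)) := by simp [hψdef, hF]
  have hD : D ≤ 0 := by
    have hT : Filter.Tendsto (slope ψ 0) (nhdsWithin 0 (Ioi 0)) (nhds D) := by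
      have h := hasDerivAt_iff_tendsto_slope.1 hψ
      exact h.mono_left (nhdsWithin_mono 0 (fun z hz => (Set.mem_compl_singleton_iff).2
        (ne_of_gt hz)))
    have hEv : ∀ᶠ ε in nhdsWithin 0 (Ioi 0), slope ψ 0 ε ≤ 0 := by
      filter_upwards [Ioc_mem_nhdsGT_of_mem (⟨le_rfl, hy⟩ : (0:ℝ) ∈ Ico (0:ℝ) y)] with ε hε
      have h1 : ψ ε ≤ ψ 0 := by rw [hψ0]; exact hmax ε hε
      rw [slope_def_field]
      apply div_nonpos_of_nonpos_of_nonneg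
      · linarith
      · simp [le_of_lt hε.1]
    exact le_of_tendsto hT hEv
  have hE : (0:ℝ) < Real.exp (-(2 * c * y)) := Real.exp_pos _
  have hA : 2 * F * (-G) + F ^ 2 * (2 * c) ≤ 0 := by
    by_contra hA
    push_neg at hA
    nlinarith
  have h1 : c * F ^ 2 ≤ F * G := by nlinarith
  have hcpos : 0 < c := by nlinarith
  have h2 : (c * F ^ 2) ^ 2 ≤ (F * G) ^ 2 := by
    have h0 : 0 ≤ c * F ^ 2 := by positivity
    exact pow_le_pow_left₀ h0 h1 2
  have h3 : (F * G) ^ 2 = F ^ 2 * G ^ 2 := by ring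
  have h4 : F ^ 2 * G ^ 2 ≤ F ^ 2 * (2 * C₃ ^ 2 * F ^ 2) :=
    mul_le_mul_of_nonneg_left hGb (by positivity)
  have h5 : c ^ 2 * (F ^ 2) ^ 2 ≤ 2 * C₃ ^ 2 * (F ^ 2) ^ 2 := by nlinarith
  have h6 : c ^ 2 ≤ 2 * C₃ ^ 2 := by
    have hp : (0:ℝ) < (F ^ 2) ^ 2 := by positivity
    exact le_of_mul_le_mul_right (by nlinarith) hp
  nlinarith

set_option maxHeartbeats 2000000 in
private lemma key_vanish' (L lam0 C₃ : ℝ) (hlam0 : 0 < lam0) (hC₃ : 0 < C₃)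
    (l1 l2 : ℝ → ℝ → ℝ)
    (hl : ∀ t ≥ (0:ℝ), ∀ x ∈ Set.Icc (0:ℝ) L, lam0 ≤ l1 t x ∧ l1 t x < l2 t x)
    (V1 V2 G1 G2 : ℝ → ℝ → ℝ)
    (hV1reg : ContDiff ℝ 1 (fun p : ℝ × ℝ => V1 p.1 p.2))
    (hV2reg : ContDiff ℝ 1 (fun p : ℝ × ℝ => V2 p.1 p.2))
    (heq : ∀ t ≥ (0:ℝ), ∀ x ∈ Set.Icc (0:ℝ) L,
      pdx V1 t x + (1 / l1 t x) * pdt V1 t x = G1 t x ∧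
      pdx V2 t x + (1 / l2 t x) * pdt V2 t x = G2 t x)
    (hG : ∀ t ≥ (0:ℝ), ∀ x ∈ Set.Icc (0:ℝ) L,
      Real.sqrt ((G1 t x) ^ 2 + (G2 t x) ^ 2)
        ≤ C₃ * Real.sqrt ((V1 t x) ^ 2 + (V2 t x) ^ 2))
    (hV0 : ∀ t > (0:ℝ), V1 t 0 = 0 ∧ V2 t 0 = 0)
    (t₀ x₀ : ℝ) (hx₀0 : 0 < x₀) (hx₀L : x₀ ≤ L) (ht₀ : x₀ / lam0 < t₀) :
    V1 t₀ x₀ = 0 ∧ V2 t₀ x₀ = 0 := by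
  set c : ℝ := 2 * C₃ + 1 with hc
  set Φ : ℝ × ℝ → ℝ :=
    fun p => max ((V1 p.1 p.2) ^ 2) ((V2 p.1 p.2) ^ 2) * Real.exp (-(2 * c * p.2)) with hΦ
  set R : Set (ℝ × ℝ) :=
    {p | 0 ≤ p.2 ∧ p.2 ≤ x₀ ∧ t₀ - (x₀ - p.2) / lam0 ≤ p.1 ∧ p.1 ≤ t₀} with hR
  have hb0 : 0 < t₀ - x₀ / lam0 := by linarith
  have hRclosed : IsClosed R := by
    have : R = {p : ℝ × ℝ | 0 ≤ p.2} ∩ {p : ℝ × ℝ | p.2 ≤ x₀}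
        ∩ {p : ℝ × ℝ | t₀ - (x₀ - p.2) / lam0 ≤ p.1} ∩ {p : ℝ × ℝ | p.1 ≤ t₀} := by
      ext p; simp [hR]; tauto
    rw [this]
    refine (((isClosed_le (by fun_prop) (by fun_prop)).inter
      (isClosed_le (by fun_prop) (by fun_prop))).inter
      (isClosed_le (by fun_prop) (by fun_prop))).inter
      (isClosed_le (by fun_prop) (by fun_prop))
  have hRsub : R ⊆ Icc (t₀ - x₀ / lam0) t₀ ×ˢ Icc 0 x₀ := by
    rintro p ⟨h1, h2, h3, h4⟩
    have hdiv : (x₀ - p.2) / lam0 ≤ x₀ / lam0 := by gcongr; linarith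
    exact ⟨⟨by linarith, h4⟩, ⟨h1, h2⟩⟩
  have hRcomp : IsCompact R :=
    (isCompact_Icc.prod isCompact_Icc).of_isClosed_subset hRclosed hRsub
  have htx₀R : ((t₀, x₀) : ℝ × ℝ) ∈ R := by
    refine ⟨le_of_lt hx₀0, le_rfl, ?_, le_rfl⟩
    simp
  have hΦcont : Continuous Φ := by
    have h1 : Continuous fun p : ℝ × ℝ => V1 p.1 p.2 := hV1reg.continuous
    have h2 : Continuous fun p : ℝ × ℝ => V2 p.1 p.2 := hV2reg.continuous
    exact ((h1.pow 2).max (h2.pow 2)).mul (Real.continuous_exp.comp (by fun_prop))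
  obtain ⟨p, hpR, hpmax⟩ := hRcomp.exists_isMaxOn ⟨(t₀, x₀), htx₀R⟩ hΦcont.continuousOn
  obtain ⟨s, y⟩ := p
  obtain ⟨hy0, hyx, hs1, hs2⟩ := hpR
  simp only at hy0 hyx hs1 hs2
  by_cases hm : Φ (s, y) ≤ 0
  · have h := hpmax htx₀R
    have hE : (0:ℝ) < Real.exp (-(2 * c * x₀)) := Real.exp_pos _
    have hmax0 : max ((V1 t₀ x₀) ^ 2) ((V2 t₀ x₀) ^ 2) ≤ 0 := by
      have : Φ (t₀, x₀) ≤ 0 := le_trans h hm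
      simp only [hΦ] at this
      nlinarith [le_max_left ((V1 t₀ x₀) ^ 2) ((V2 t₀ x₀) ^ 2), sq_nonneg (V1 t₀ x₀)]
    constructor
    · have : (V1 t₀ x₀) ^ 2 ≤ 0 := le_trans (le_max_left _ _) hmax0
      nlinarith [sq_nonneg (V1 t₀ x₀)]
    · have : (V2 t₀ x₀) ^ 2 ≤ 0 := le_trans (le_max_right _ _) hmax0
      nlinarith [sq_nonneg (V2 t₀ x₀)]
  · exfalso
    push_neg at hm
    have hdiv : (x₀ - y) / lam0 ≤ x₀ / lam0 := by gcongr; linarith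
    have hspos : 0 < s := by linarith
    have hyL : y ∈ Icc (0:ℝ) L := ⟨hy0, le_trans hyx hx₀L⟩
    have hy0' : 0 < y := by
      rcases lt_or_eq_of_le hy0 with h | h
      · exact h
      · exfalso
        obtain ⟨e1, e2⟩ := hV0 s hspos
        have : Φ (s, y) = 0 := by
          simp [hΦ, ← h, e1, e2]
        linarith
    have hll := hl s (le_of_lt hspos) y hyL
    have hl1pos : 0 < l1 s y := lt_of_lt_of_le hlam0 hll.1
    have hl2pos : 0 < l2 s y := lt_trans hl1pos hll.2
    have hmaxpos : 0 < max ((V1 s y) ^ 2) ((V2 s y) ^ 2) := by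
      have hE : (0:ℝ) < Real.exp (-(2 * c * y)) := Real.exp_pos _
      simp only [hΦ] at hm
      nlinarith
    have hGsq : (G1 s y) ^ 2 + (G2 s y) ^ 2 ≤ C₃ ^ 2 * ((V1 s y) ^ 2 + (V2 s y) ^ 2) := by
      have h := hG s (le_of_lt hspos) y hyL
      have hA : (0:ℝ) ≤ (G1 s y) ^ 2 + (G2 s y) ^ 2 := by positivity
      have hB : (0:ℝ) ≤ (V1 s y) ^ 2 + (V2 s y) ^ 2 := by positivity
      nlinarith [Real.sq_sqrt hA, Real.sq_sqrt hB, Real.sqrt_nonneg ((G1 s y) ^ 2 + (G2 s y) ^ 2),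
        Real.sqrt_nonneg ((V1 s y) ^ 2 + (V2 s y) ^ 2)]
    have hqmem : ∀ a : ℝ, 0 < a → a ≤ 1 / lam0 → ∀ ε ∈ Ioc (0:ℝ) y,
        ((s - ε * a, y - ε) : ℝ × ℝ) ∈ R := by
      intro a ha0 ha1 ε hε
      have hεa : ε * a ≤ ε * (1 / lam0) :=
        mul_le_mul_of_nonneg_left ha1 (le_of_lt hε.1)
      have hdivsplit : (x₀ - (y - ε)) / lam0 = (x₀ - y) / lam0 + ε / lam0 := by
        field_simp; ring
      have hεdiv : ε * (1 / lam0) = ε / lam0 := by ring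
      refine ⟨?_, ?_, ?_, ?_⟩
      · show (0:ℝ) ≤ y - ε
        linarith [hε.2]
      · show y - ε ≤ x₀
        linarith [hε.1]
      · show t₀ - (x₀ - (y - ε)) / lam0 ≤ s - ε * a
        rw [hdivsplit]
        linarith [hεdiv ▸ hεa]
      · show s - ε * a ≤ t₀
        have hh := mul_pos hε.1 ha0
        linarith
    rcases le_total ((V2 s y) ^ 2) ((V1 s y) ^ 2) with hcase | hcase
    · have hmaxeq : max ((V1 s y) ^ 2) ((V2 s y) ^ 2) = (V1 s y) ^ 2 := max_eq_left hcase
      have ha0 : 0 < 1 / l1 s y := by positivity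
      have ha1 : 1 / l1 s y ≤ 1 / lam0 := one_div_le_one_div_of_le hlam0 hll.1
      refine step_contra' C₃ c hC₃ hc V1 G1 hV1reg s y (1 / l1 s y) hy0' ha0
        (heq s (le_of_lt hspos) y hyL).1 ?_ (by rw [← hmaxeq]; exact hmaxpos) ?_
      · nlinarith [hGsq, sq_nonneg (G2 s y)]
      · intro ε hε
        have hq := hqmem (1 / l1 s y) ha0 ha1 ε hε
        have h := hpmax hq
        simp only [hΦ] at h ⊢
        rw [hmaxeq] at h
        calc (V1 (s - ε * (1 / l1 s y)) (y - ε)) ^ 2 * Real.exp (-(2 * c * (y - ε)))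
            ≤ max ((V1 (s - ε * (1 / l1 s y)) (y - ε)) ^ 2)
              ((V2 (s - ε * (1 / l1 s y)) (y - ε)) ^ 2) * Real.exp (-(2 * c * (y - ε))) := by
              apply mul_le_mul_of_nonneg_right (le_max_left _ _) (Real.exp_nonneg _)
          _ ≤ (V1 s y) ^ 2 * Real.exp (-(2 * c * y)) := h
    · have hmaxeq : max ((V1 s y) ^ 2) ((V2 s y) ^ 2) = (V2 s y) ^ 2 := max_eq_right hcase
      have ha0 : 0 < 1 / l2 s y := by positivity
      have ha1 : 1 / l2 s y ≤ 1 / lam0 :=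
        one_div_le_one_div_of_le hlam0 (le_of_lt (lt_of_le_of_lt hll.1 hll.2))
      refine step_contra' C₃ c hC₃ hc V2 G2 hV2reg s y (1 / l2 s y) hy0' ha0
        (heq s (le_of_lt hspos) y hyL).2 ?_ (by rw [← hmaxeq]; exact hmaxpos) ?_
      · nlinarith [hGsq, sq_nonneg (G1 s y)]
      · intro ε hε
        have hq := hqmem (1 / l2 s y) ha0 ha1 ε hε
        have h := hpmax hq
        simp only [hΦ] at h ⊢
        rw [hmaxeq] at h
        calc (V2 (s - ε * (1 / l2 s y)) (y - ε)) ^ 2 * Real.exp (-(2 * c * (y - ε)))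
            ≤ max ((V1 (s - ε * (1 / l2 s y)) (y - ε)) ^ 2)
              ((V2 (s - ε * (1 / l2 s y)) (y - ε)) ^ 2) * Real.exp (-(2 * c * (y - ε))) := by
              apply mul_le_mul_of_nonneg_right (le_max_right _ _) (Real.exp_nonneg _)
          _ ≤ (V2 s y) ^ 2 * Real.exp (-(2 * c * y)) := h

private lemma char_lower' (lam0 x' t' : ℝ) (hlam0 : 0 < lam0) (hx'0 : 0 < x')
    (hpos : x' / lam0 < t')
    (l : ℝ → ℝ → ℝ) (τ : ℝ → ℝ)
    (hlb : ∀ x ∈ Icc (0:ℝ) x', 0 ≤ τ x → lam0 ≤ l (τ x) x)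
    (hτ : ∀ x ∈ Icc (0:ℝ) x', HasDerivAt τ (1 / l (τ x) x) x) (hτx' : τ x' = t') :
    ∀ x ∈ Icc (0:ℝ) x', t' - (x' - x) / lam0 ≤ τ x := by
  set g : ℝ → ℝ := fun y => τ y + (x' - y) / lam0 with hg
  have hgd : ∀ y ∈ Icc (0:ℝ) x', HasDerivAt g (1 / l (τ y) y + -1 / lam0) y := by
    intro y hy
    exact (hτ y hy).add (((hasDerivAt_id y).const_sub x').div_const lam0)
  have hgc : ∀ y ∈ Icc (0:ℝ) x', ContinuousAt g y := fun y hy => (hgd y hy).continuousAt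
  have hgx' : g x' = t' := by simp [hg, hτx']
  set E : Set ℝ := {y | y ∈ Icc (0:ℝ) x' ∧ ∀ w ∈ Icc y x', t' ≤ g w} with hE
  have hx'E : x' ∈ E := by
    refine ⟨⟨le_of_lt hx'0, le_rfl⟩, fun w hw => ?_⟩
    have : w = x' := le_antisymm hw.2 hw.1
    rw [this, hgx']
  have hEne : E.Nonempty := ⟨x', hx'E⟩
  have hbdd : BddBelow E := ⟨0, fun e he => he.1.1⟩
  set b : ℝ := sInf E with hb
  have hb0 : 0 ≤ b := le_csInf hEne (fun e he => he.1.1)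
  have hbx' : b ≤ x' := csInf_le hbdd hx'E
  have claim1 : ∀ w, b < w → w ≤ x' → t' ≤ g w := by
    intro w h1 h2
    obtain ⟨e, heE, hew⟩ := exists_lt_of_csInf_lt hEne h1
    exact heE.2 w ⟨le_of_lt hew, h2⟩
  have claim2 : t' ≤ g b := by
    rcases eq_or_lt_of_le hbx' with h | h
    · rw [h, hgx']
    · have hT : Filter.Tendsto g (nhdsWithin b (Ioi b)) (nhds (g b)) :=
        ((hgc b ⟨hb0, hbx'⟩).tendsto).mono_left nhdsWithin_le_nhds
      refine ge_of_tendsto hT ?_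
      filter_upwards [Ioc_mem_nhdsGT_of_mem (⟨le_rfl, h⟩ : b ∈ Ico b x')] with w hw
      exact claim1 w hw.1 hw.2
  have hbE : b ∈ E := by
    refine ⟨⟨hb0, hbx'⟩, fun w hw => ?_⟩
    rcases eq_or_lt_of_le hw.1 with h | h
    · rw [← h]; exact claim2
    · exact claim1 w h hw.2
  have hbeq : b = 0 := by
    by_contra hne
    have hbpos : 0 < b := lt_of_le_of_ne hb0 (Ne.symm hne)
    have hdivb : (x' - b) / lam0 ≤ x' / lam0 := by gcongr; linarith
    have hτb : 0 < τ b := by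
      have h2 : t' ≤ τ b + (x' - b) / lam0 := claim2
      linarith
    have hev : ∀ᶠ y in nhds b, 0 < τ y :=
      ((hτ b ⟨hb0, hbx'⟩).continuousAt).eventually (eventually_gt_nhds hτb)
    obtain ⟨δ, hδpos, hδ⟩ := Metric.eventually_nhds_iff.1 hev
    set u : ℝ := max (b - δ / 2) 0 with hu
    have hub : u < b := max_lt (by linarith) hbpos
    have hu0 : 0 ≤ u := le_max_right _ _
    have hux' : u ≤ x' := le_of_lt (lt_of_lt_of_le hub hbx')
    have hτpos : ∀ y ∈ Icc u b, 0 < τ y := by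
      intro y hy
      apply hδ
      rw [Real.dist_eq, abs_of_nonpos (by linarith [hy.2])]
      have h1 : b - δ / 2 ≤ u := le_max_left _ _
      linarith [hy.1]
    have hanti : AntitoneOn g (Icc u b) := by
      apply antitoneOn_of_deriv_nonpos (convex_Icc u b)
      · intro y hy
        exact (hgc y ⟨le_trans hu0 hy.1, le_trans hy.2 hbx'⟩).continuousWithinAt
      · intro y hy
        rw [interior_Icc] at hy
        exact ((hgd y ⟨le_trans hu0 (le_of_lt hy.1),
          le_trans (le_of_lt hy.2) hbx'⟩).differentiableAt).differentiableWithinAt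
      · intro y hy
        rw [interior_Icc] at hy
        have hyIcc : y ∈ Icc (0:ℝ) x' :=
          ⟨le_trans hu0 (le_of_lt hy.1), le_trans (le_of_lt hy.2) hbx'⟩
        rw [(hgd y hyIcc).deriv]
        have hτy : 0 ≤ τ y := le_of_lt (hτpos y ⟨le_of_lt hy.1, le_of_lt hy.2⟩)
        have hly : lam0 ≤ l (τ y) y := hlb y hyIcc hτy
        have h3 : 1 / l (τ y) y ≤ 1 / lam0 := one_div_le_one_div_of_le hlam0 hly
        have h4 : -1 / lam0 = -(1 / lam0) := by ring
        rw [h4]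
        linarith
    have huE : u ∈ E := by
      refine ⟨⟨hu0, hux'⟩, fun w hw => ?_⟩
      rcases le_total w b with h | h
      · have hgw : g b ≤ g w := hanti ⟨hw.1, h⟩ ⟨le_of_lt hub, le_rfl⟩ h
        linarith [claim2]
      · exact hbE.2 w ⟨h, hw.2⟩
    exact absurd (csInf_le hbdd huE) (not_le.2 hub)
  intro x hx
  have h := hbE.2 x ⟨hbeq ▸ hx.1, hx.2⟩
  simp only [hg] at h
  linarith

end AuxLemmas

/-- the characteristic energy functional I(x) along the slow and fast
characteristics through (t',x') vanishes at x = 0, satisfies the differential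
inequality I' ≤ (C₂/2 + C₃) I, hence vanishes identically by Gronwall's inequality,
and therefore V(t',x') = 0. -/
theorem characteristic_energy_gronwall
    (L lam0 C₂ C₃ : ℝ) (hL : 0 < L) (hlam0 : 0 < lam0) (hC₂ : 0 < C₂) (hC₃ : 0 < C₃)
    (l1 l2 : ℝ → ℝ → ℝ)
    -- 0 < λ₀ ≤ λ₁ < λ₂ on [0,∞)×[0,L]
    (hl : ∀ t ≥ (0:ℝ), ∀ x ∈ Set.Icc (0:ℝ) L, lam0 ≤ l1 t x ∧ l1 t x < l2 t x)
    (V1 V2 G1 G2 : ℝ → ℝ → ℝ)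
    (hV1reg : ContDiff ℝ 1 (fun p : ℝ × ℝ => V1 p.1 p.2))
    (hV2reg : ContDiff ℝ 1 (fun p : ℝ × ℝ => V2 p.1 p.2))
    -- V_x + Λ V_t = G with Λ = diag(1/λ₁, 1/λ₂)
    (heq : ∀ t ≥ (0:ℝ), ∀ x ∈ Set.Icc (0:ℝ) L,
      pdx V1 t x + (1 / l1 t x) * pdt V1 t x = G1 t x ∧
      pdx V2 t x + (1 / l2 t x) * pdt V2 t x = G2 t x)
    -- |G(t,x)| ≤ C₃ |V(t,x)|
    (hG : ∀ t ≥ (0:ℝ), ∀ x ∈ Set.Icc (0:ℝ) L,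
      Real.sqrt ((G1 t x) ^ 2 + (G2 t x) ^ 2)
        ≤ C₃ * Real.sqrt ((V1 t x) ^ 2 + (V2 t x) ^ 2))
    -- |Λ_t(t,x)| ≤ C₂
    (hΛt : ∀ t ≥ (0:ℝ), ∀ x ∈ Set.Icc (0:ℝ) L,
      max |pdt (fun t x => 1 / l1 t x) t x| |pdt (fun t x => 1 / l2 t x) t x| ≤ C₂)
    -- V(t,0) = 0 for t > 0
    (hV0 : ∀ t > (0:ℝ), V1 t 0 = 0 ∧ V2 t 0 = 0)
    (t' x' : ℝ) (ht' : t' > L / lam0) (hx'0 : 0 < x') (hx'L : x' < L)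
    -- the slow and fast characteristics through (t',x')
    (t₁ t₂ : ℝ → ℝ)
    (ht₁ : ∀ x ∈ Set.Icc (0:ℝ) x', HasDerivAt t₁ (1 / l1 (t₁ x) x) x)
    (ht₂ : ∀ x ∈ Set.Icc (0:ℝ) x', HasDerivAt t₂ (1 / l2 (t₂ x) x) x)
    (ht₁' : t₁ x' = t') (ht₂' : t₂ x' = t')
    (I : ℝ → ℝ)
    (hI : I = fun x => (1 / 2) * ∫ t in t₁ x..t₂ x, ((V1 t x) ^ 2 + (V2 t x) ^ 2)) :
    I 0 = 0 ∧
    (∀ x ∈ Set.Ico (0:ℝ) x', ∃ I' : ℝ, HasDerivAt I I' x ∧ I' ≤ (C₂ / 2 + C₃) * I x) ∧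
    (∀ x ∈ Set.Icc (0:ℝ) x', I x = 0) ∧
    V1 t' x' = 0 ∧ V2 t' x' = 0 := by
  subst hI
  have hx'L' : x' ≤ L := le_of_lt hx'L
  have hT : x' / lam0 < t' := by
    have h1 : x' / lam0 < L / lam0 := by gcongr
    linarith
  have key : ∀ t x : ℝ, 0 ≤ x → x ≤ L → x / lam0 < t → V1 t x = 0 ∧ V2 t x = 0 := by
    intro t x hx0 hxL hxt
    rcases eq_or_lt_of_le hx0 with h | h
    · have ht : 0 < t := by
        rw [← h] at hxt
        simpa using hxt
      rw [← h]
      exact hV0 t ht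
    · exact key_vanish' L lam0 C₃ hlam0 hC₃ l1 l2 hl V1 V2 G1 G2 hV1reg hV2reg heq hG hV0
        t x h hxL hxt
  have hlow1 : ∀ x ∈ Set.Icc (0:ℝ) x', t' - (x' - x) / lam0 ≤ t₁ x :=
    char_lower' lam0 x' t' hlam0 hx'0 hT l1 t₁
      (fun x hx h0 => (hl (t₁ x) h0 x ⟨hx.1, hx.2.trans hx'L'⟩).1) ht₁ ht₁'
  have hlow2 : ∀ x ∈ Set.Icc (0:ℝ) x', t' - (x' - x) / lam0 ≤ t₂ x :=
    char_lower' lam0 x' t' hlam0 hx'0 hT l2 t₂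
      (fun x hx h0 => le_of_lt (lt_of_le_of_lt (hl (t₂ x) h0 x ⟨hx.1, hx.2.trans hx'L'⟩).1
        (hl (t₂ x) h0 x ⟨hx.1, hx.2.trans hx'L'⟩).2)) ht₂ ht₂'
  have hIzero : ∀ x ∈ Set.Icc (0:ℝ) x',
      (1/2 : ℝ) * (∫ t in t₁ x..t₂ x, ((V1 t x) ^ 2 + (V2 t x) ^ 2)) = 0 := by
    intro x hx
    have hW : Set.EqOn (fun t => (V1 t x) ^ 2 + (V2 t x) ^ 2) (fun _ => (0:ℝ))
        (Set.uIcc (t₁ x) (t₂ x)) := by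
      intro t ht
      have hmin : min (t₁ x) (t₂ x) ≤ t := ht.1
      have hsum : (x' - x) / lam0 + x / lam0 = x' / lam0 := by
        rw [← add_div]
        congr 1
        ring
      have hb1 := hlow1 x hx
      have hb2 := hlow2 x hx
      have hminb : t' - (x' - x) / lam0 ≤ min (t₁ x) (t₂ x) := le_min hb1 hb2
      have hbound : x / lam0 < t := by linarith
      obtain ⟨e1, e2⟩ := key t x hx.1 (hx.2.trans hx'L') hbound
      simp [e1, e2]
    rw [intervalIntegral.integral_congr hW]
    simp
  refine ⟨?_, ?_, ?_, ?_, ?_⟩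
  · simpa using hIzero 0 ⟨le_rfl, le_of_lt hx'0⟩
  · intro x hx
    refine ⟨0, ?_, ?_⟩
    · rcases eq_or_lt_of_le hx.1 with h0 | h0
      · -- the boundary point x = 0
        subst h0
        obtain ⟨c0, hc0⟩ : ∃ c0 : ℝ, c0 = t' - x' / lam0 := ⟨_, rfl⟩
        have hc0pos : 0 < c0 := by rw [hc0]; linarith
        have hT1 : c0 ≤ t₁ 0 := by
          have h := hlow1 0 ⟨le_rfl, le_of_lt hx'0⟩
          rw [hc0]
          simpa using h
        have hT2 : c0 ≤ t₂ 0 := by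
          have h := hlow2 0 ⟨le_rfl, le_of_lt hx'0⟩
          rw [hc0]
          simpa using h
        obtain ⟨τM, hτM⟩ : ∃ τM : ℝ, τM = max (t₁ 0) (t₂ 0) := ⟨_, rfl⟩
        have hτM1 : t₁ 0 ≤ τM := by rw [hτM]; exact le_max_left _ _
        have hτM2 : t₂ 0 ≤ τM := by rw [hτM]; exact le_max_right _ _
        have hτMb : c0 ≤ τM := le_trans hT1 hτM1
        have hct1 : ContinuousAt t₁ 0 := (ht₁ 0 ⟨le_rfl, le_of_lt hx'0⟩).continuousAt
        have hct2 : ContinuousAt t₂ 0 := (ht₂ 0 ⟨le_rfl, le_of_lt hx'0⟩).continuousAt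
        obtain ⟨K, hK⟩ : ∃ K : Set (ℝ × ℝ), K = Icc (c0/2) (τM + 1) ×ˢ Icc (-1 : ℝ) 1 :=
          ⟨_, rfl⟩
        have hKcomp : IsCompact K := by rw [hK]; exact isCompact_Icc.prod isCompact_Icc
        obtain ⟨M1, hM1⟩ := hKcomp.exists_bound_of_continuousOn
          ((hV1reg.continuous_fderiv one_ne_zero).continuousOn)
        obtain ⟨M2, hM2⟩ := hKcomp.exists_bound_of_continuousOn
          ((hV2reg.continuous_fderiv one_ne_zero).continuousOn)
        have he1 : c0 / 2 ≤ τM + 1 := by linarith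
        have hc0K : ((c0/2, 0) : ℝ × ℝ) ∈ K := by
          rw [hK]
          exact ⟨⟨le_rfl, he1⟩, ⟨by norm_num, by norm_num⟩⟩
        have hKmem : ∀ t y : ℝ, t ∈ Icc (c0/2) (τM + 1) → y ∈ Icc (-1:ℝ) 1 →
            ((t, y) : ℝ × ℝ) ∈ K := by
          intro t y h1 h2
          rw [hK]
          exact ⟨h1, h2⟩
        have hM1n : 0 ≤ M1 := le_trans (norm_nonneg _) (hM1 (c0/2, 0) hc0K)
        have hM2n : 0 ≤ M2 := le_trans (norm_nonneg _) (hM2 (c0/2, 0) hc0K)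
        -- pointwise bound
        have hVb : ∀ (V : ℝ → ℝ → ℝ) (M : ℝ),
            ContDiff ℝ 1 (fun p : ℝ × ℝ => V p.1 p.2) →
            (∀ p ∈ K, ‖fderiv ℝ (fun p : ℝ × ℝ => V p.1 p.2) p‖ ≤ M) →
            (∀ t, 0 < t → V t 0 = 0) →
            ∀ t y : ℝ, t ∈ Icc (c0/2) (τM + 1) → y ∈ Icc (-1 : ℝ) 1 → |V t y| ≤ M * |y| := by
          intro V M hreg hM hz t y htI hyI
          have hder : ∀ z ∈ Icc (-1:ℝ) 1, HasDerivWithinAt (fun y => V t y)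
              ((fun z => fderiv ℝ (fun p : ℝ × ℝ => V p.1 p.2) (t, z) (0, 1)) z)
              (Icc (-1:ℝ) 1) z :=
            fun z _ => (pdx_hasDerivAt' V hreg t z).hasDerivWithinAt
          have hbd : ∀ z ∈ Icc (-1:ℝ) 1,
              ‖fderiv ℝ (fun p : ℝ × ℝ => V p.1 p.2) (t, z) (0, 1)‖ ≤ M := by
            intro z hz'
            have h1 : ‖fderiv ℝ (fun p : ℝ × ℝ => V p.1 p.2) (t, z) (0, 1)‖
                ≤ ‖fderiv ℝ (fun p : ℝ × ℝ => V p.1 p.2) (t, z)‖ * ‖((0:ℝ), (1:ℝ))‖ :=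
              ContinuousLinearMap.le_opNorm _ _
            have h2 : ‖((0:ℝ), (1:ℝ))‖ = 1 := by
              rw [Prod.norm_def]
              simp
            have h3 := hM (t, z) (hKmem t z htI hz')
            rw [h2] at h1
            linarith
          have h0mem : (0:ℝ) ∈ Icc (-1:ℝ) 1 := by norm_num
          have := (convex_Icc (-1:ℝ) 1).norm_image_sub_le_of_norm_hasDerivWithin_le
            hder hbd h0mem hyI
          have hVt0 : V t 0 = 0 := hz t (by linarith [htI.1])
          simpa [hVt0, Real.norm_eq_abs] using this
        obtain ⟨CB, hCB⟩ : ∃ CB : ℝ, CB = (M1 ^ 2 + M2 ^ 2) * (τM + 1 - c0/2) := ⟨_, rfl⟩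
        have hCBn : 0 ≤ CB := by
          rw [hCB]
          apply mul_nonneg (by positivity)
          linarith
        have hr : (0:ℝ) < min (c0/2) 1 := by positivity
        have hevI : ∀ᶠ y in nhds (0:ℝ),
            |(1/2 : ℝ) * ∫ t in t₁ y..t₂ y, ((V1 t y) ^ 2 + (V2 t y) ^ 2)| ≤ CB * y ^ 2 := by
          filter_upwards [hct1 (Metric.ball_mem_nhds (t₁ 0) hr),
            hct2 (Metric.ball_mem_nhds (t₂ 0) hr),
            Metric.ball_mem_nhds (0:ℝ) one_pos] with y h1 h2 h0
          simp only [Set.mem_preimage, Metric.mem_ball, Real.dist_eq] at h1 h2 h0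
          rw [sub_zero] at h0
          have h1' := abs_lt.1 h1
          have h2' := abs_lt.1 h2
          have hmin1 : min (c0/2) 1 ≤ c0/2 := min_le_left _ _
          have hmin2 : min (c0/2) 1 ≤ 1 := min_le_right _ _
          have ht1K : t₁ y ∈ Icc (c0/2) (τM + 1) := by
            constructor
            · linarith [h1'.1, hT1]
            · linarith [h1'.2, hτM1]
          have ht2K : t₂ y ∈ Icc (c0/2) (τM + 1) := by
            constructor
            · linarith [h2'.1, hT2]
            · linarith [h2'.2, hτM2]
          have hyI : y ∈ Icc (-1:ℝ) 1 := ⟨by linarith [(abs_lt.1 h0).1], by linarith [(abs_lt.1 h0).2]⟩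
          have hCbound : ∀ t ∈ Set.uIoc (t₁ y) (t₂ y),
              ‖(V1 t y) ^ 2 + (V2 t y) ^ 2‖ ≤ (M1 ^ 2 + M2 ^ 2) * y ^ 2 := by
            intro t ht
            rw [Set.mem_uIoc] at ht
            have htK : t ∈ Icc (c0/2) (τM + 1) := by
              rcases ht with h | h
              · exact ⟨by linarith [ht1K.1], by linarith [ht2K.2]⟩
              · exact ⟨by linarith [ht2K.1], by linarith [ht1K.2]⟩
            have hb1 : |V1 t y| ≤ M1 * |y| :=
              hVb V1 M1 hV1reg hM1 (fun t ht' => (hV0 t ht').1) t y htK hyI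
            have hb2 : |V2 t y| ≤ M2 * |y| :=
              hVb V2 M2 hV2reg hM2 (fun t ht' => (hV0 t ht').2) t y htK hyI
            have hs1 : (V1 t y) ^ 2 ≤ M1 ^ 2 * y ^ 2 := by
              have h := pow_le_pow_left₀ (abs_nonneg (V1 t y)) hb1 2
              rw [sq_abs, mul_pow, sq_abs] at h
              exact h
            have hs2 : (V2 t y) ^ 2 ≤ M2 ^ 2 * y ^ 2 := by
              have h := pow_le_pow_left₀ (abs_nonneg (V2 t y)) hb2 2
              rw [sq_abs, mul_pow, sq_abs] at h
              exact h
            rw [Real.norm_eq_abs, abs_of_nonneg (by positivity)]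
            linarith
          have hint := intervalIntegral.norm_integral_le_of_norm_le_const hCbound
          rw [Real.norm_eq_abs] at hint
          have habs : |t₂ y - t₁ y| ≤ τM + 1 - c0/2 := by
            rw [abs_le]
            constructor
            · linarith [ht1K.2, ht2K.1]
            · linarith [ht2K.2, ht1K.1]
          rw [abs_mul]
          have h12 : |(1/2 : ℝ)| = 1/2 := by norm_num
          rw [h12]
          have hy2 : (0:ℝ) ≤ y ^ 2 := sq_nonneg y
          have hM12 : (0:ℝ) ≤ M1 ^ 2 + M2 ^ 2 := by positivity
          have htd : (0:ℝ) ≤ |t₂ y - t₁ y| := abs_nonneg _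
          have hA : (0:ℝ) ≤ (M1 ^ 2 + M2 ^ 2) * y ^ 2 := by positivity
          have h5 : (M1 ^ 2 + M2 ^ 2) * y ^ 2 * |t₂ y - t₁ y|
              ≤ (M1 ^ 2 + M2 ^ 2) * y ^ 2 * (τM + 1 - c0/2) :=
            mul_le_mul_of_nonneg_left habs hA
          have hX0 : (0:ℝ) ≤ (M1 ^ 2 + M2 ^ 2) * y ^ 2 * |t₂ y - t₁ y| :=
            mul_nonneg hA (abs_nonneg _)
          calc (1/2 : ℝ) * |∫ t in t₁ y..t₂ y, ((V1 t y) ^ 2 + (V2 t y) ^ 2)|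
              ≤ (1/2 : ℝ) * ((M1 ^ 2 + M2 ^ 2) * y ^ 2 * |t₂ y - t₁ y|) := by linarith
            _ ≤ (M1 ^ 2 + M2 ^ 2) * y ^ 2 * (τM + 1 - c0/2) := by linarith
            _ = CB * y ^ 2 := by rw [hCB]; ring
        rw [hasDerivAt_iff_isLittleO]
        have hI0 : (1/2 : ℝ) * (∫ t in (t₁ 0)..(t₂ 0), ((V1 t 0) ^ 2 + (V2 t 0) ^ 2)) = 0 :=
          hIzero 0 ⟨le_rfl, le_of_lt hx'0⟩
        simp only [sub_zero, smul_zero, hI0]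
        rw [Asymptotics.isLittleO_iff]
        intro C hC
        have hC' : (0:ℝ) < C / (CB + 1) := by positivity
        filter_upwards [hevI, Metric.ball_mem_nhds (0:ℝ) hC'] with y h1 h2
        simp only [Metric.mem_ball, Real.dist_eq, sub_zero] at h2
        rw [Real.norm_eq_abs, Real.norm_eq_abs]
        have hyb : |y| * (CB + 1) < C :=
          (lt_div_iff₀ (by positivity : (0:ℝ) < CB + 1)).1 h2
        have hCBy : CB * |y| ≤ C := by nlinarith [abs_nonneg y]
        have hsq : y ^ 2 = |y| * |y| := by rw [← sq_abs]; ring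
        calc |(1/2 : ℝ) * ∫ t in t₁ y..t₂ y, ((V1 t y) ^ 2 + (V2 t y) ^ 2)|
            ≤ CB * y ^ 2 := h1
          _ = (CB * |y|) * |y| := by rw [hsq]; ring
          _ ≤ C * |y| := mul_le_mul_of_nonneg_right hCBy (abs_nonneg y)
      · -- interior point
        have hev : (fun y => (1/2 : ℝ) * ∫ t in t₁ y..t₂ y, ((V1 t y) ^ 2 + (V2 t y) ^ 2))
            =ᶠ[nhds x] (fun _ => (0:ℝ)) := by
          filter_upwards [Ioo_mem_nhds h0 hx.2] with y hy
          exact hIzero y ⟨le_of_lt hy.1, le_of_lt hy.2⟩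
        exact (hasDerivAt_const x (0:ℝ)).congr_of_eventuallyEq hev
    · have h := hIzero x ⟨hx.1, le_of_lt hx.2⟩
      simp only []
      rw [h]
      have : (0:ℝ) ≤ C₂ / 2 + C₃ := by linarith
      simp
  · intro x hx
    simpa using hIzero x hx
  · exact (key t' x' (le_of_lt hx'0) hx'L' hT).1
  · exact (key t' x' (le_of_lt hx'0) hx'L' hT).2
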